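/- For every K ≥ 0 and ε > 0 there exists δ > 0 (depending only on K, ε, T and the network data, not on φ) with the following property: for every absolutely continuous path φ : [0,T] → ℝ₊^R with I_T(φ) ≤ K and every finite collection of pairwise nonoverlapping intervals [t_j, t_{j+1}] ⊆ [0,T] with Σ_j (t_{j+1} − t_j) ≤ δ, one has Σ_j Σ_{ij ∈ R} |φ_ij(t_{j+1}) − φ_ij(t_j)| ≤ ε. -/

import Mathlib

open Classical Filter MeasureTheory
open scoped ENNReal

noncomputable section

/-- The M/M/1 cost `l(D‖λ,μ)` that a suitably normalized `M/M/1` queue with arrival rate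
`λ` and service rate `μ` follows the drift `D`.  (Lean's conventions `Real.log 0 = 0` and
`0 * y = 0` implement the convention `0 · log 0 = 0`.) -/
def mmCost (D lam mu : ℝ) : ℝ :=
  D * Real.log ((D + Real.sqrt (D ^ 2 + 4 * lam * mu)) / (2 * lam))
    + lam + mu - Real.sqrt (D ^ 2 + 4 * lam * mu)

/-- The relative entropy `I_p(ν‖λ)` of Poisson processes of intensities `ν` and `λ`.
(Lean's conventions `x / 0 = 0`, `Real.log 0 = 0` and `0 * y = 0` implement the
conventions `0/0 = 0` and `0 · log 0 = 0`.) -/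
def poissonEntropy (nu lam : ℝ) : ℝ := nu * Real.log (nu / lam) - nu + lam

/-- A star network: a finite set `S` of channels with capacities `C i > 0`, and a set `R`
of routes, each route `r` being an unordered pair of distinct channels
`{fst r, snd r}`, with arrival rates `lam r > 0` and service parameters `mu r > 0`. -/
structure StarNetwork (S R : Type*) where
  /-- one endpoint of a route -/
  fst : R → S
  /-- the other endpoint of a route -/
  snd : R → S
  fst_ne_snd : ∀ r, fst r ≠ snd r
  /-- the capacity of each channel -/
  C : S → ℝ
  C_pos : ∀ i, 0 < C i
  /-- the arrival rate on each route -/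
  lam : R → ℝ
  lam_pos : ∀ r, 0 < lam r
  /-- the service parameter of each route -/
  mu : R → ℝ
  mu_pos : ∀ r, 0 < mu r

namespace StarNetwork

variable {S R : Type*} [Fintype S] [Fintype R]

/-- `N.touches i r` means that channel `i` is one of the two endpoints of route `r`. -/
def touches (N : StarNetwork S R) (i : S) (r : R) : Prop :=
  N.fst r = i ∨ N.snd r = i

/-- The load `x_i = ∑_{j : ij ∈ R} x_ij` of channel `i`. -/
def load (N : StarNetwork S R) (x : R → ℝ) (i : S) : ℝ :=
  ∑ r : R, if N.touches i r then x r else 0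

/-- The service rate `μ_ij(x) = μ_ij · x_ij · min (C_i / x_i) (C_j / x_j)` if `x_ij > 0`,
and `μ_ij(x) = 0` if `x_ij = 0`. -/
def srv (N : StarNetwork S R) (x : R → ℝ) (r : R) : ℝ :=
  if 0 < x r then
    N.mu r * x r *
      min (N.C (N.fst r) / N.load x (N.fst r)) (N.C (N.snd r) / N.load x (N.snd r))
  else 0

/-- The face `Λ(x) = {ij ∈ R : x_ij > 0}` of saturated routes. -/
def face (N : StarNetwork S R) (x : R → ℝ) : Set R := {r | 0 < x r}

/-- The jammed routes `Λ₁(x)`: routes `ij` with `x_ij = 0` such that some route of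
`Λ(x)` contains `i` or contains `j`. -/
def jammed (N : StarNetwork S R) (x : R → ℝ) : Set R :=
  {r | x r = 0 ∧ ∃ r' ∈ N.face x, N.touches (N.fst r) r' ∨ N.touches (N.snd r) r'}

/-- The ergodic routes `Λ₂(x) = R \ (Λ(x) ∪ Λ₁(x))`. -/
def ergodicRoutes (N : StarNetwork S R) (x : R → ℝ) : Set R :=
  (N.face x ∪ N.jammed x)ᶜ

/-- The local rate function `L(x, D) = ∑_{ij ∈ Λ(x) ∪ Λ₁(x)} l(D_ij ‖ λ_ij, μ_ij(x))`
(its finite part; `L(x,D) = +∞` when `D_ij < 0` for some `ij ∉ Λ(x)`). -/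
def locRate (N : StarNetwork S R) (x D : R → ℝ) : ℝ :=
  ∑ r : R, if r ∈ N.face x ∪ N.jammed x then mmCost (D r) (N.lam r) (N.srv x r) else 0

/-- The sample path rate function `I_T(φ) = ∫₀ᵀ L(φ(t), φ̇(t)) dt ∈ [0,∞]` if `φ` is
absolutely continuous on `[0,T]`, and `I_T(φ) = +∞` otherwise (the infimum over an
empty family is `⊤`; any two densities of `φ` coincide a.e. on `[0,T]`, so the
infimum is the common value of the integral). -/
def pathRate (N : StarNetwork S R) (T : ℝ) (φ : ℝ → R → ℝ) : ℝ≥0∞ :=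
  ⨅ (f : ℝ → R → ℝ) (_ : IntegrableOn f (Set.Icc 0 T))
    (_ : ∀ t ∈ Set.Icc (0 : ℝ) T, φ t = φ 0 + ∫ s in (0 : ℝ)..t, f s),
    ∫⁻ t in Set.Ioc (0 : ℝ) T, ENNReal.ofReal (N.locRate (φ t) (f t))

end StarNetwork


set_option linter.unusedSectionVars false
set_option linter.unusedVariables false
set_option maxHeartbeats 1000000

open Metric in
theorem le_mmCost (D lam mu θ : ℝ) (hl : 0 < lam) (hm : 0 < mu) :
    θ * D - lam * (Real.exp θ - 1) - mu * (Real.exp (-θ) - 1) ≤ mmCost D lam mu := by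
  set s := Real.sqrt (D ^ 2 + 4 * lam * mu) with hs
  have hs2 : s ^ 2 = D ^ 2 + 4 * lam * mu := Real.sq_sqrt (by positivity)
  have hs0 : 0 ≤ s := Real.sqrt_nonneg _
  have hsD : |D| < s := by
    nlinarith [sq_abs D, abs_nonneg D]
  have hDs : 0 < D + s := by
    have := neg_abs_le D; linarith
  have hsD' : 0 < s - D := by have := le_abs_self D; linarith
  set u := (D + s) / (2 * lam * Real.exp θ) with hu
  have hupos : 0 < u := by positivity
  have hlogu : Real.log ((D + s) / (2 * lam)) = Real.log u + θ := by
    have h1 : (D + s) / (2 * lam) = u * Real.exp θ := by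
      rw [hu]; field_simp
    rw [h1, Real.log_mul (ne_of_gt hupos) (Real.exp_ne_zero θ), Real.log_exp]
  set p := (D + s) / 2 with hp
  set q := (s - D) / 2 with hq
  have hppos : 0 < p := by positivity
  have hqpos : 0 < q := by positivity
  have key1 : lam * Real.exp θ * u = p := by
    rw [hu, hp]; field_simp
  have key2 : mu * Real.exp (-θ) = q * u := by
    have h4 : (s - D) * (D + s) = 4 * lam * mu := by nlinarith
    rw [hq, hu, Real.exp_neg]
    rw [div_mul_div_comm]
    rw [eq_div_iff (by positivity)]
    field_simp
    nlinarith [Real.exp_pos θ]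
  have f3 : 0 ≤ Real.log u + u⁻¹ - 1 := by
    have := Real.one_sub_inv_le_log_of_pos hupos; linarith
  have f4 : 0 ≤ u - 1 - Real.log u := by
    have := Real.log_le_sub_one_of_pos hupos; linarith
  have f1 : lam * Real.exp θ = p * u⁻¹ := by
    field_simp at key1 ⊢
    rw [mul_comm] at key1
    nlinarith [key1]
  have hgoal0 : 0 ≤ (p - q) * Real.log u + p * u⁻¹ + q * u - (p + q) := by
    nlinarith [mul_nonneg hppos.le f3, mul_nonneg hqpos.le f4]
  have hD : D = p - q := by rw [hp, hq]; ring
  have hseq : s = p + q := by rw [hp, hq]; ring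
  rw [mmCost, ← hs, hlogu]
  nlinarith [hgoal0]

theorem abs_le_mmCost {lam mu M : ℝ} (A D : ℝ) (hA : 0 ≤ A) (hl : 0 < lam) (hm : 0 < mu)
    (hM : mu ≤ M) : A * |D| - (lam + M) * Real.exp A ≤ mmCost D lam mu := by
  have hM0 : 0 ≤ M := hm.le.trans hM
  have he : 0 < Real.exp A := Real.exp_pos A
  rcases le_or_gt 0 D with hD | hD
  · have h := le_mmCost D lam mu A hl hm
    have h1 : Real.exp (-A) ≤ 1 := Real.exp_le_one_iff.mpr (by linarith)
    rw [abs_of_nonneg hD]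
    nlinarith
  · have h := le_mmCost D lam mu (-A) hl hm
    have h1 : Real.exp (-A) ≤ 1 := Real.exp_le_one_iff.mpr (by linarith)
    rw [abs_of_neg hD]
    rw [neg_neg] at h
    nlinarith


theorem mmCost_zero_zero {lam : ℝ} (hl : 0 < lam) : mmCost 0 lam 0 = lam := by
  simp [mmCost]

open Metric Topology in
theorem ae_zero_of_levelset (u : ℝ → ℝ) (hu : Integrable u (volume : Measure ℝ)) (c : ℝ) :
    ∀ᵐ x ∂(volume.restrict {x : ℝ | (∫ s in (0:ℝ)..x, u s) = c}), u x = 0 := by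
  set A := {x : ℝ | (∫ s in (0:ℝ)..x, u s) = c} with hA
  have hAmeas : MeasurableSet A := by
    have hcont : Continuous (fun x : ℝ => ∫ s in (0:ℝ)..x, u s) :=
      intervalIntegral.continuous_primitive (fun a b => hu.intervalIntegrable) 0
    exact hcont.measurable (measurableSet_singleton c)
  have hLp : ∀ᵐ x ∂(volume : Measure ℝ),
      Filter.Tendsto (fun r => ⨍ y in closedBall x r, ‖u y - u x‖) (𝓝[>] 0) (𝓝 0) := by
    filter_upwards [(Besicovitch.vitaliFamily (volume : Measure ℝ)).ae_tendsto_average_norm_sub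
      hu.locallyIntegrable] with x hx
    exact hx.comp (Besicovitch.tendsto_filterAt _ x)
  have hdens := Besicovitch.ae_tendsto_measure_inter_div (volume : Measure ℝ) A
  filter_upwards [ae_mono Measure.restrict_le_self hLp, hdens, ae_restrict_mem hAmeas]
    with x hx hd hxA
  by_contra h0
  have hux : 0 < |u x| := abs_pos.mpr h0
  set ε := |u x| / 8 with hε
  have hεpos : 0 < ε := by positivity
  have h1 : ∀ᶠ r in 𝓝[>] (0:ℝ), ⨍ y in closedBall x r, ‖u y - u x‖ < ε :=
    hx.eventually (Filter.Tendsto.eventually_lt_const hεpos tendsto_id) |>.mono (fun r hr => hr)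
  have h2 : ∀ᶠ r in 𝓝[>] (0:ℝ),
      (3/4 : ℝ≥0∞) < volume (A ∩ closedBall x r) / volume (closedBall x r) :=
    hd.eventually (eventually_gt_nhds (by rw [ENNReal.div_lt_iff (by norm_num) (by norm_num)]; norm_num))
  have h3 : ∀ᶠ r in 𝓝[>] (0:ℝ), (0:ℝ) < r := eventually_mem_nhdsWithin
  obtain ⟨r, ⟨havg, hratio⟩, hr0⟩ := ((h1.and h2).and h3).exists
  -- extract a point y of A with r/2 < |y - x| ≤ r
  have hcb : volume (closedBall x r) = ENNReal.ofReal (2*r) := Real.volume_closedBall x r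
  have hgt : ENNReal.ofReal r < volume (A ∩ closedBall x r) := by
    rw [ENNReal.lt_div_iff_mul_lt (by rw [hcb]; exact Or.inl (by simp [ENNReal.ofReal_pos]; positivity))
      (by rw [hcb]; exact Or.inl ENNReal.ofReal_ne_top)] at hratio
    calc ENNReal.ofReal r < 3/4 * volume (closedBall x r) := by
          rw [hcb]
          rw [show (3/4 : ℝ≥0∞) = ENNReal.ofReal (3/4) by
            rw [ENNReal.ofReal_div_of_pos (by norm_num)]; norm_num]
          rw [← ENNReal.ofReal_mul (by norm_num)]
          exact ENNReal.ofReal_lt_ofReal_iff (by linarith) |>.mpr (by linarith)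
      _ < volume (A ∩ closedBall x r) := hratio
  have hnotsub : ¬ (A ∩ closedBall x r ⊆ closedBall x (r/2)) := by
    intro hsub
    have := measure_mono (μ := (volume : MeasureTheory.Measure ℝ)) hsub
    rw [Real.volume_closedBall] at this
    have h2r : ENNReal.ofReal (2*(r/2)) = ENNReal.ofReal r := by rw [show 2*(r/2) = r by ring]
    rw [h2r] at this
    exact absurd (hgt.trans_le this) (lt_irrefl _)
  obtain ⟨y, ⟨hyA, hycb⟩, hynot⟩ := Set.not_subset.mp hnotsub
  have hd1 : dist y x ≤ r := mem_closedBall.mp hycb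
  have hd2 : r/2 < dist y x := lt_of_not_ge (fun h => hynot (mem_closedBall.mpr h))
  rw [Real.dist_eq] at hd1 hd2
  -- the integral of u over x..y vanishes
  have hint0 : (∫ s in x..y, u s) = 0 := by
    have := intervalIntegral.integral_interval_sub_left
      (hu.intervalIntegrable (a := 0) (b := y)) (hu.intervalIntegrable (a := 0) (b := x))
    have hy' : (∫ s in (0:ℝ)..y, u s) = c := hyA
    have hx' : (∫ s in (0:ℝ)..x, u s) = c := hxA
    rw [hy', hx'] at this
    simpa using this.symm
  -- compare with the constant u x
  have hii : IntervalIntegrable u volume x y := hu.intervalIntegrable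
  have hsubI : Set.uIoc x y ⊆ closedBall x r := by
    intro s hs
    rw [Set.uIoc] at hs
    obtain ⟨hs1, hs2⟩ := hs
    rw [mem_closedBall, Real.dist_eq, abs_le]
    rcases le_total x y with h | h
    · rw [min_eq_left h, max_eq_right h] at *
      have := abs_le.mp hd1
      constructor <;> linarith
    · rw [min_eq_right h, max_eq_left h] at *
      have := abs_le.mp hd1
      constructor <;> linarith
  have hIcb : IntegrableOn (fun s => ‖u s - u x‖) (closedBall x r) volume :=
    ((hu.integrableOn.sub (integrableOn_const measure_closedBall_lt_top.ne)).norm)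
  have step1 : |(y - x) * u x| ≤ ∫ s in Set.uIoc x y, ‖u s - u x‖ := by
    have hc : (∫ s in x..y, (u s - u x)) = -((y - x) * u x) := by
      rw [intervalIntegral.integral_sub hii (intervalIntegrable_const (μ := (volume : MeasureTheory.Measure ℝ)))]
      rw [hint0, intervalIntegral.integral_const]
      simp [mul_comm]
    have := intervalIntegral.norm_integral_le_integral_norm_uIoc
      (f := fun s => u s - u x) (a := x) (b := y) (μ := volume)
    rw [hc] at this
    rw [abs_mul]
    simpa [Real.norm_eq_abs, abs_neg, abs_mul] using this
  have step2 : (∫ s in Set.uIoc x y, ‖u s - u x‖) ≤ ∫ s in closedBall x r, ‖u s - u x‖ := by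
    apply setIntegral_mono_set hIcb
    · exact Filter.Eventually.of_forall (fun s => norm_nonneg _)
    · exact HasSubset.Subset.eventuallyLE hsubI
  have step3 : (∫ s in closedBall x r, ‖u s - u x‖) = 2*r * ⨍ s in closedBall x r, ‖u s - u x‖ := by
    rw [setAverage_eq, measureReal_def, hcb, ENNReal.toReal_ofReal (by linarith)]
    rw [smul_eq_mul, ← mul_assoc, mul_inv_cancel₀ (by linarith), one_mul]
  have habs : r/2 * |u x| < 2*r*ε := by
    have hyx : r/2 < |y - x| := hd2
    calc r/2 * |u x| ≤ |y - x| * |u x| := by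
          apply mul_le_mul_of_nonneg_right hyx.le (abs_nonneg _)
      _ = |(y - x) * u x| := (abs_mul _ _).symm
      _ ≤ ∫ s in Set.uIoc x y, ‖u s - u x‖ := step1
      _ ≤ ∫ s in closedBall x r, ‖u s - u x‖ := step2
      _ = 2*r * ⨍ s in closedBall x r, ‖u s - u x‖ := step3
      _ < 2*r*ε := by
          apply mul_lt_mul_of_pos_left havg (by linarith)
  rw [hε] at habs
  nlinarith

namespace StarNetwork
variable {S R : Type*} [Fintype S] [Fintype R]

theorem load_pos (N : StarNetwork S R) {x : R → ℝ} (hx : ∀ r, 0 ≤ x r) {r : R} (hr : 0 < x r)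
    (i : S) (hi : N.touches i r) : 0 < N.load x i := by
  have h1 : x r ≤ N.load x i := by
    rw [load]
    have := Finset.single_le_sum (f := fun r' : R => if N.touches i r' then x r' else 0)
      (fun r' _ => by split <;> [exact hx r'; exact le_rfl]) (Finset.mem_univ r)
    simpa [hi] using this
  exact lt_of_lt_of_le hr h1

theorem srv_le (N : StarNetwork S R) {x : R → ℝ} (hx : ∀ r, 0 ≤ x r) (r : R) :
    N.srv x r ≤ N.mu r * N.C (N.fst r) := by
  rw [srv]
  split_ifs with h
  · have hto : N.touches (N.fst r) r := Or.inl rfl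
    have hload : x r ≤ N.load x (N.fst r) := by
      rw [load]
      have := Finset.single_le_sum (f := fun r' : R => if N.touches (N.fst r) r' then x r' else 0)
        (fun r' _ => by split <;> [exact hx r'; exact le_rfl]) (Finset.mem_univ r)
      simpa [hto] using this
    have hloadpos : 0 < N.load x (N.fst r) := lt_of_lt_of_le h hload
    calc N.mu r * x r * min (N.C (N.fst r) / N.load x (N.fst r)) (N.C (N.snd r) / N.load x (N.snd r))
        ≤ N.mu r * x r * (N.C (N.fst r) / N.load x (N.fst r)) := by
          exact mul_le_mul_of_nonneg_left (min_le_left _ _) (mul_nonneg (N.mu_pos r).le (hx r))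
      _ ≤ N.mu r * x r * (N.C (N.fst r) / x r) := by
          apply mul_le_mul_of_nonneg_left _ (mul_nonneg (N.mu_pos r).le (hx r))
          exact div_le_div_of_nonneg_left (N.C_pos _).le h hload
      _ = N.mu r * N.C (N.fst r) := by field_simp
  · have := (N.mu_pos r).le
    have := (N.C_pos (N.fst r)).le
    positivity

theorem srv_pos (N : StarNetwork S R) {x : R → ℝ} (hx : ∀ r, 0 ≤ x r) {r : R} (hr : 0 < x r) :
    0 < N.srv x r := by
  rw [srv, if_pos hr]
  have h1 := N.load_pos hx hr (N.fst r) (Or.inl rfl)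
  have h2 := N.load_pos hx hr (N.snd r) (Or.inr rfl)
  have := N.C_pos (N.fst r)
  have := N.C_pos (N.snd r)
  have := N.mu_pos r
  apply mul_pos (by positivity)
  apply lt_min <;> positivity

theorem srv_eq_zero (N : StarNetwork S R) {x : R → ℝ} {r : R} (h : x r = 0) : N.srv x r = 0 := by
  rw [srv, if_neg]; rw [h]; exact lt_irrefl 0

theorem locRate_bound (N : StarNetwork S R) (x D : R → ℝ) (hx : ∀ r, 0 ≤ x r)
    (hD : ∀ r, x r = 0 → D r = 0) (A : ℝ) (hA : 0 ≤ A) :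
    A * ∑ r, |D r| ≤ N.locRate x D
      + (∑ r, (N.lam r + N.mu r * N.C (N.fst r))) * Real.exp A := by
  rw [locRate, Finset.mul_sum, Finset.sum_mul, ← Finset.sum_add_distrib]
  apply Finset.sum_le_sum
  intro r _
  rcases lt_or_eq_of_le (hx r) with hr | hr
  · have hface : r ∈ N.face x ∪ N.jammed x := Or.inl hr
    rw [if_pos hface]
    have hsrvpos := N.srv_pos hx hr
    have hsrvle := N.srv_le hx r
    have := abs_le_mmCost A (D r) hA (N.lam_pos r) hsrvpos hsrvle
    linarith
  · have hxr : x r = 0 := hr.symm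
    rw [hD r hxr, abs_zero, mul_zero]
    have h2 : 0 ≤ (N.lam r + N.mu r * N.C (N.fst r)) * Real.exp A := by
      have := N.lam_pos r; have := N.mu_pos r; have := N.C_pos (N.fst r); positivity
    have h1 : 0 ≤ if r ∈ N.face x ∪ N.jammed x then mmCost 0 (N.lam r) (N.srv x r) else 0 := by
      split_ifs with h
      · rw [N.srv_eq_zero hxr, mmCost_zero_zero (N.lam_pos r)]
        exact (N.lam_pos r).le
      · exact le_rfl
    linarith
end StarNetwork

/-- For every `K ≥ 0` and `ε > 0` there exists `δ > 0` (depending only on `K`, `ε`, `T`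
and the network data, not on `φ`) with the following property: for every absolutely
continuous path `φ : [0,T] → ℝ₊^R` with `I_T(φ) ≤ K` and every finite collection of
pairwise nonoverlapping intervals `[a_j, b_j] ⊆ [0,T]` with `∑_j (b_j − a_j) ≤ δ`, one
has `∑_j ∑_{ij ∈ R} |φ_ij(b_j) − φ_ij(a_j)| ≤ ε`. -/
theorem pathRate_uniform_abs_continuity {S R : Type*} [Fintype S] [Fintype R]
    (N : StarNetwork S R) (T K ε : ℝ) (hT : 0 < T) (hK : 0 ≤ K) (hε : 0 < ε) :
    ∃ δ > 0, ∀ φ f : ℝ → R → ℝ,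
      IntegrableOn f (Set.Icc 0 T) →
      (∀ t ∈ Set.Icc (0 : ℝ) T, φ t = φ 0 + ∫ s in (0 : ℝ)..t, f s) →
      (∀ t ∈ Set.Icc (0 : ℝ) T, ∀ r, 0 ≤ φ t r) →
      N.pathRate T φ ≤ ENNReal.ofReal K →
      ∀ (m : ℕ) (a b : Fin m → ℝ),
        (∀ j, a j ∈ Set.Icc (0 : ℝ) T ∧ b j ∈ Set.Icc (0 : ℝ) T ∧ a j ≤ b j) →
        (∀ j k, j ≠ k → Disjoint (Set.Ioo (a j) (b j)) (Set.Ioo (a k) (b k))) →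
        (∑ j, (b j - a j)) ≤ δ →
        ∑ j, ∑ r : R, |φ (b j) r - φ (a j) r| ≤ ε := by
  classical
  set Aq : ℝ := 2 * (K + 1) / ε + 1 with hAqdef
  have hAq : 0 < Aq := by positivity
  set B : ℝ := (∑ r : R, (N.lam r + N.mu r * N.C (N.fst r))) * Real.exp Aq + 1 with hBdef
  have hsumnn : 0 ≤ ∑ r : R, (N.lam r + N.mu r * N.C (N.fst r)) := by
    apply Finset.sum_nonneg
    intro r _
    have := N.lam_pos r; have := N.mu_pos r; have := N.C_pos (N.fst r)
    positivity
  have hB : 1 ≤ B := by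
    have : 0 ≤ (∑ r : R, (N.lam r + N.mu r * N.C (N.fst r))) * Real.exp Aq :=
      mul_nonneg hsumnn (Real.exp_pos _).le
    linarith
  have hB0 : 0 < B := by linarith
  set δ : ℝ := ε * Aq / (2 * B) with hδdef
  have hδ : 0 < δ := by positivity
  refine ⟨δ, hδ, ?_⟩
  intro φ f0 hf0i hf0d hφnn hrate m a b hab hdisj hsum
  -- extract a density with rate at most K + 1
  have hlt : N.pathRate T φ < ENNReal.ofReal (K + 1) :=
    lt_of_le_of_lt hrate ((ENNReal.ofReal_lt_ofReal_iff (by linarith)).mpr (by linarith))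
  rw [StarNetwork.pathRate] at hlt
  simp only [iInf_lt_iff] at hlt
  obtain ⟨f, hfi, hfd, hKf⟩ := hlt
  -- componentwise integrability
  have hfir : ∀ r : R, IntegrableOn (fun t => f t r) (Set.Icc 0 T) := by
    intro r
    exact (ContinuousLinearMap.proj (R := ℝ) (φ := fun _ : R => ℝ) r).integrable_comp hfi
  -- increments
  have hIocsub : ∀ {c d : ℝ}, c ∈ Set.Icc (0:ℝ) T → d ∈ Set.Icc (0:ℝ) T →
      Set.Icc c d ⊆ Set.Icc 0 T := by
    intro c d hc hd s hs
    exact ⟨hc.1.trans hs.1, hs.2.trans hd.2⟩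
  have hII : ∀ {c d : ℝ}, c ∈ Set.Icc (0:ℝ) T → d ∈ Set.Icc (0:ℝ) T → c ≤ d →
      ∀ r : R, IntervalIntegrable (fun t => f t r) volume c d := by
    intro c d hc hd hcd r
    apply IntegrableOn.intervalIntegrable
    rw [Set.uIcc_of_le hcd]
    exact (hfir r).mono_set (hIocsub hc hd)
  have hIIp : ∀ {c d : ℝ}, c ∈ Set.Icc (0:ℝ) T → d ∈ Set.Icc (0:ℝ) T → c ≤ d →
      IntervalIntegrable f volume c d := by
    intro c d hc hd hcd
    apply IntegrableOn.intervalIntegrable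
    rw [Set.uIcc_of_le hcd]
    exact hfi.mono_set (hIocsub hc hd)
  have hzeroIcc : (0:ℝ) ∈ Set.Icc (0:ℝ) T := ⟨le_refl 0, hT.le⟩
  have heval : ∀ {c : ℝ}, c ∈ Set.Icc (0:ℝ) T → ∀ r : R,
      (∫ s in (0:ℝ)..c, f s) r = ∫ s in (0:ℝ)..c, f s r := by
    intro c hc r
    rw [intervalIntegral.integral_of_le hc.1, intervalIntegral.integral_of_le hc.1]
    exact (ContinuousLinearMap.integral_comp_comm
      (ContinuousLinearMap.proj (R := ℝ) (φ := fun _ : R => ℝ) r)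
      (hfi.mono_set (fun s hs => ⟨hs.1.le, hs.2.trans hc.2⟩))).symm
  have hincr : ∀ {c : ℝ}, c ∈ Set.Icc (0:ℝ) T → ∀ r : R,
      φ c r - φ 0 r = ∫ s in (0:ℝ)..c, f s r := by
    intro c hc r
    have h1 := hfd c hc
    have h2 : φ c r = φ 0 r + (∫ s in (0:ℝ)..c, f s) r := by
      rw [h1]; simp
    rw [h2, heval hc r]; ring
  -- a.e. vanishing of the density where the path vanishes
  have hzero : ∀ᵐ t ∂(volume.restrict (Set.Ioc 0 T)), ∀ r : R, φ t r = 0 → f t r = 0 := by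
    rw [ae_all_iff]
    intro r
    set u : ℝ → ℝ := Set.indicator (Set.Icc 0 T) (fun t => f t r) with hudef
    have hu : Integrable u (volume : Measure ℝ) :=
      (integrable_indicator_iff measurableSet_Icc).mpr (hfir r)
    have key := ae_zero_of_levelset u hu (-(φ 0 r))
    set A' : Set ℝ := {x : ℝ | (∫ s in (0:ℝ)..x, u s) = -(φ 0 r)} with hA'def
    have hA'meas : MeasurableSet A' := by
      have hcont : Continuous (fun x : ℝ => ∫ s in (0:ℝ)..x, u s) :=
        intervalIntegral.continuous_primitive (fun a' b' => hu.intervalIntegrable) 0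
      exact hcont.measurable (measurableSet_singleton _)
    have key2 : ∀ᵐ x ∂(volume : Measure ℝ), x ∈ A' → u x = 0 :=
      (ae_restrict_iff' hA'meas).mp key
    filter_upwards [ae_mono Measure.restrict_le_self key2, ae_restrict_mem measurableSet_Ioc]
      with t h1 h2 hφ0
    have hmem : t ∈ Set.Icc (0:ℝ) T := ⟨h2.1.le, h2.2⟩
    have hcongr : (∫ s in (0:ℝ)..t, u s) = ∫ s in (0:ℝ)..t, f s r := by
      apply intervalIntegral.integral_congr
      intro s hs
      rw [Set.uIcc_of_le hmem.1] at hs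
      have hsmem : s ∈ Set.Icc (0:ℝ) T := ⟨hs.1, hs.2.trans hmem.2⟩
      simp [hudef, Set.indicator_of_mem hsmem]
    have htA : t ∈ A' := by
      have := hincr hmem r
      rw [hφ0] at this
      rw [hA'def, Set.mem_setOf_eq, hcongr]
      linarith
    have := h1 htA
    rwa [hudef, Set.indicator_of_mem hmem] at this
  -- the pointwise lower bound on the local rate
  have hbound : ∀ᵐ t ∂(volume.restrict (Set.Ioc 0 T)),
      ENNReal.ofReal (Aq * ∑ r : R, |f t r|) ≤
        ENNReal.ofReal (N.locRate (φ t) (f t)) + ENNReal.ofReal B := by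
    filter_upwards [hzero, ae_restrict_mem measurableSet_Ioc] with t hz ht
    have hmem : t ∈ Set.Icc (0:ℝ) T := ⟨ht.1.le, ht.2⟩
    have hreal := N.locRate_bound (φ t) (f t) (hφnn t hmem) hz Aq hAq.le
    calc ENNReal.ofReal (Aq * ∑ r : R, |f t r|)
        ≤ ENNReal.ofReal (N.locRate (φ t) (f t) + B) := by
          apply ENNReal.ofReal_le_ofReal
          have : (∑ r : R, (N.lam r + N.mu r * N.C (N.fst r))) * Real.exp Aq ≤ B := by
            rw [hBdef]; linarith
          linarith
      _ ≤ ENNReal.ofReal (N.locRate (φ t) (f t)) + ENNReal.ofReal B := ENNReal.ofReal_add_le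
  -- the total variation function
  set g : ℝ → ℝ := fun t => ∑ r : R, |f t r| with hgdef
  have hgi : IntegrableOn g (Set.Icc 0 T) := by
    apply integrable_finset_sum
    intro r _
    exact (hfir r).abs
  have hgnn : ∀ t, 0 ≤ g t := fun t => Finset.sum_nonneg (fun r _ => abs_nonneg _)
  -- the union of the intervals
  set U : Set ℝ := ⋃ j, Set.Ioo (a j) (b j) with hUdef
  have hUm : MeasurableSet U := MeasurableSet.iUnion (fun j => measurableSet_Ioo)
  have hUsub : U ⊆ Set.Ioc 0 T := by
    intro s hs
    rw [hUdef, Set.mem_iUnion] at hs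
    obtain ⟨j, hj⟩ := hs
    obtain ⟨haj, hbj, _⟩ := hab j
    exact ⟨lt_of_le_of_lt haj.1 hj.1, hj.2.le.trans hbj.2⟩
  have hUvol : volume U ≤ ENNReal.ofReal δ := by
    calc volume U ≤ ∑' j, volume (Set.Ioo (a j) (b j)) := measure_iUnion_le _
      _ = ∑ j, volume (Set.Ioo (a j) (b j)) := tsum_fintype _
      _ = ∑ j, ENNReal.ofReal (b j - a j) := by
          apply Finset.sum_congr rfl
          intro j _
          exact Real.volume_Ioo
      _ = ENNReal.ofReal (∑ j, (b j - a j)) := by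
          rw [ENNReal.ofReal_sum_of_nonneg]
          intro j _
          have := (hab j).2.2; linarith
      _ ≤ ENNReal.ofReal δ := ENNReal.ofReal_le_ofReal hsum
  have hgiU : IntegrableOn g U := hgi.mono_set (hUsub.trans Set.Ioc_subset_Icc_self)
  -- the key integral bound
  have hUg : Aq * ∫ t in U, g t ≤ (K + 1) + B * δ := by
    have hAg : IntegrableOn (fun t => Aq * g t) U := hgiU.const_mul Aq
    have step : ENNReal.ofReal (∫ t in U, Aq * g t) ≤
        ENNReal.ofReal (K + 1) + ENNReal.ofReal (B * δ) := by
      rw [ofReal_integral_eq_lintegral_ofReal hAg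
        (Filter.Eventually.of_forall (fun t => mul_nonneg hAq.le (hgnn t)))]
      calc ∫⁻ t in U, ENNReal.ofReal (Aq * g t)
          ≤ ∫⁻ t in U, (ENNReal.ofReal (N.locRate (φ t) (f t)) + ENNReal.ofReal B) := by
            apply lintegral_mono_ae
            exact ae_mono (Measure.restrict_mono hUsub le_rfl) hbound
        _ = (∫⁻ t in U, ENNReal.ofReal (N.locRate (φ t) (f t))) + ENNReal.ofReal B * volume U := by
            rw [lintegral_add_right _ measurable_const, lintegral_const,
              Measure.restrict_apply_univ]
        _ ≤ (∫⁻ t in Set.Ioc 0 T, ENNReal.ofReal (N.locRate (φ t) (f t)))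
              + ENNReal.ofReal B * volume U := by
            apply add_le_add_left
            exact lintegral_mono' (Measure.restrict_mono hUsub le_rfl) le_rfl
        _ ≤ ENNReal.ofReal (K + 1) + ENNReal.ofReal (B * δ) := by
            apply add_le_add hKf.le
            rw [ENNReal.ofReal_mul hB0.le]
            exact mul_le_mul_right hUvol _
    rw [← ENNReal.ofReal_add (by linarith) (by positivity), integral_const_mul] at step
    exact (ENNReal.ofReal_le_ofReal_iff (by positivity)).mp step
  have hfinal : ∫ t in U, g t ≤ ε := by
    have hBδ : B * δ = ε * Aq / 2 := by
      rw [hδdef]; field_simp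
    have h1 : ε * Aq = 2 * (K + 1) + ε := by
      rw [hAqdef]; field_simp
    have hc : Aq * ε = ε * Aq := mul_comm _ _
    have h2 : Aq * ∫ t in U, g t ≤ Aq * ε := by
      clear_value Aq B δ
      linarith
    exact le_of_mul_le_mul_left h2 hAq
  -- conclusion
  calc ∑ j, ∑ r : R, |φ (b j) r - φ (a j) r|
      ≤ ∑ j, ∫ t in Set.Ioo (a j) (b j), g t := by
        apply Finset.sum_le_sum
        intro j _
        obtain ⟨haj, hbj, hjle⟩ := hab j
        have hIIj : ∀ r : R, IntervalIntegrable (fun t => f t r) volume (a j) (b j) :=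
          hII haj hbj hjle
        calc ∑ r : R, |φ (b j) r - φ (a j) r|
            ≤ ∑ r : R, ∫ t in Set.Ioc (a j) (b j), |f t r| := by
              apply Finset.sum_le_sum
              intro r _
              have hd : φ (b j) r - φ (a j) r = ∫ s in (a j)..(b j), f s r := by
                have h1 := hincr haj r
                have h2 := hincr hbj r
                have h3 := intervalIntegral.integral_interval_sub_left
                  (hII hzeroIcc hbj hbj.1 r) (hII hzeroIcc haj haj.1 r)
                rw [← h3, ← h1, ← h2]; ring
              rw [hd, intervalIntegral.integral_of_le hjle]
              have := norm_integral_le_integral_norm (μ := volume.restrict (Set.Ioc (a j) (b j)))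
                (f := fun t => f t r)
              simpa [Real.norm_eq_abs] using this
          _ = ∫ t in Set.Ioc (a j) (b j), g t := by
              rw [integral_finset_sum]
              intro r _
              exact MeasureTheory.IntegrableOn.mono_set ((hfir r).abs)
                (fun s hs => ⟨haj.1.trans hs.1.le, hs.2.trans hbj.2⟩)
          _ = ∫ t in Set.Ioo (a j) (b j), g t := by
              rw [integral_Ioc_eq_integral_Ioo]
    _ = ∫ t in U, g t := by
        rw [integral_iUnion (fun j => measurableSet_Ioo) (fun j k hjk => hdisj j k hjk) hgiU]
        exact (tsum_fintype _).symm
    _ ≤ ε := hfinal
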